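/- Let O be a discrete valuation ring and L a field equipped with an injective ring homomorphism O → L. Let R be a commutative Noetherian local O-algebra with finite residue field, and let Φ: R → R be an O-algebra automorphism. For each integer n > 0, let I_n be the ideal of R generated by {Φⁿ(x) − x : x ∈ R}. Assume that for every n > 0 the quotient R/I_n is a finitely generated flat O-module and that the ring (R/I_n) ⊗_O L is reduced. If α ∈ R is such that for every n > 0 the image of α in (R/I_n) ⊗_O L lies in every maximal ideal of (R/I_n) ⊗_O L, then α = 0. -/

import Mathlib

universe u v

open IsLocalRing in
/-- A finitely generated module over a noetherian local ring with finite residue field,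
annihilated by a power of the maximal ideal, is finite. -/
lemma aux_finite_of_pow_smul_eq_bot (R : Type v) [CommRing R] [IsLocalRing R]
    [IsNoetherianRing R] [Finite (ResidueField R)] (k : ℕ) :
    ∀ (M : Type u) [AddCommGroup M] [Module R M] [Module.Finite R M],
      (maximalIdeal R) ^ k • (⊤ : Submodule R M) = ⊥ → Finite M := by
  induction k with
  | zero =>
    intro M _ _ _ h
    rw [pow_zero, Ideal.one_eq_top, Submodule.top_smul] at h
    have : Subsingleton M := by
      constructor
      intro a b
      have ha : a ∈ (⊥ : Submodule R M) := h ▸ Submodule.mem_top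
      have hb : b ∈ (⊥ : Submodule R M) := h ▸ Submodule.mem_top
      rw [Submodule.mem_bot] at ha hb
      rw [ha, hb]
    exact Finite.of_subsingleton
  | succ k ih =>
    intro M _ _ _ h
    haveI : Module.Finite R ((maximalIdeal R • ⊤ : Submodule R M)) :=
      Module.Finite.iff_fg.mpr (IsNoetherian.noetherian _)
    have hkN : (maximalIdeal R) ^ k •
        (⊤ : Submodule R ((maximalIdeal R • ⊤ : Submodule R M))) = ⊥ := by
      apply Submodule.map_injective_of_injective
        (Submodule.injective_subtype (maximalIdeal R • (⊤ : Submodule R M)))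
      rw [Submodule.map_smul'', Submodule.map_subtype_top, Submodule.map_bot]
      rw [pow_succ, mul_smul] at h
      exact h
    have hNfin : Finite ((maximalIdeal R • ⊤ : Submodule R M)) := ih _ hkN
    haveI : Finite (R ⧸ maximalIdeal R) := ‹Finite (ResidueField R)›
    haveI : Module.Finite (R ⧸ maximalIdeal R)
        (M ⧸ maximalIdeal R • (⊤ : Submodule R M)) :=
      Module.Finite.of_restrictScalars_finite R _ _
    have hQfin : Finite (M ⧸ maximalIdeal R • (⊤ : Submodule R M)) :=
      Module.finite_of_finite (R ⧸ maximalIdeal R)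
    haveI : Finite ((maximalIdeal R • (⊤ : Submodule R M)).toAddSubgroup) := hNfin
    haveI : Finite (M ⧸ (maximalIdeal R • (⊤ : Submodule R M)).toAddSubgroup) := hQfin
    exact Finite.of_addSubgroup_quotient
      (H := (maximalIdeal R • (⊤ : Submodule R M)).toAddSubgroup)

open TensorProduct in
theorem element_vanishing_at_all_arithmetic_points_is_zero
    {O : Type*} [CommRing O] [IsDomain O] [IsDiscreteValuationRing O]
    {L : Type*} [Field L] [Algebra O L]
    (hinj : Function.Injective (algebraMap O L))
    {R : Type*} [CommRing R] [Algebra O R] [IsNoetherianRing R] [IsLocalRing R]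
    [Finite (IsLocalRing.ResidueField R)]
    (Φ : R ≃ₐ[O] R)
    (I : ℕ → Ideal R)
    (hI : ∀ n : ℕ, I n = Ideal.span (Set.range fun x : R => (Φ ^ n) x - x))
    (hfin : ∀ n : ℕ, 0 < n → Module.Finite O (R ⧸ I n))
    (hflat : ∀ n : ℕ, 0 < n → Module.Flat O (R ⧸ I n))
    (hred : ∀ n : ℕ, 0 < n → IsReduced ((R ⧸ I n) ⊗[O] L))
    (α : R)
    (hα : ∀ n : ℕ, 0 < n → ∀ M : Ideal ((R ⧸ I n) ⊗[O] L), M.IsMaximal →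
      (Ideal.Quotient.mk (I n) α) ⊗ₜ[O] (1 : L) ∈ M) :
    α = 0 := by
  classical
  -- Step 1: α ∈ I n for every n > 0.
  have hIn : ∀ n : ℕ, 0 < n → α ∈ I n := by
    intro n hn
    haveI := hfin n hn
    haveI := hflat n hn
    haveI := hred n hn
    set a : R ⧸ I n := Ideal.Quotient.mk (I n) α with ha
    haveI : IsArtinianRing (L ⊗[O] (R ⧸ I n)) :=
      isArtinian_of_tower L inferInstance
    set e : ((R ⧸ I n) ⊗[O] L) ≃+* (L ⊗[O] (R ⧸ I n)) :=
      (Algebra.TensorProduct.comm O (R ⧸ I n) L).toRingEquiv with he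
    have hjac : e (a ⊗ₜ[O] (1 : L)) ∈ Ideal.jacobson (⊥ : Ideal (L ⊗[O] (R ⧸ I n))) := by
      rw [Ideal.jacobson]
      refine Ideal.mem_sInf.mpr ?_
      rintro J ⟨-, hJ⟩
      have hmax : (J.comap (e : ((R ⧸ I n) ⊗[O] L) →+* (L ⊗[O] (R ⧸ I n)))).IsMaximal :=
        Ideal.comap_isMaximal_of_surjective _ e.surjective
      exact hα n hn _ hmax
    obtain ⟨m, hm⟩ := IsArtinianRing.isNilpotent_jacobson_bot (R := L ⊗[O] (R ⧸ I n))
    have hnil : IsNilpotent (e (a ⊗ₜ[O] (1 : L))) := by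
      refine ⟨m, ?_⟩
      have := Ideal.pow_mem_pow hjac m
      rw [hm] at this
      simpa using this
    have hnil' : IsNilpotent ((a ⊗ₜ[O] (1 : L)) : (R ⧸ I n) ⊗[O] L) := by
      have h := hnil.map (e.symm : (L ⊗[O] (R ⧸ I n)) →+* ((R ⧸ I n) ⊗[O] L))
      simpa using h
    have hx0 : ((a ⊗ₜ[O] (1 : L)) : (R ⧸ I n) ⊗[O] L) = 0 := hnil'.eq_zero
    -- now use flatness to conclude a = 0
    have hinjT : Function.Injective ((Algebra.linearMap O L).lTensor (R ⧸ I n)) :=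
      Module.Flat.lTensor_preserves_injective_linearMap _ hinj
    have h2 : a ⊗ₜ[O] (1 : O) = (0 : (R ⧸ I n) ⊗[O] O) := by
      apply hinjT
      rw [map_zero, LinearMap.lTensor_tmul]
      simpa using hx0
    have h3 := congrArg (TensorProduct.rid O (R ⧸ I n)) h2
    rw [TensorProduct.rid_tmul, one_smul, map_zero] at h3
    exact (Ideal.Quotient.eq_zero_iff_mem).mp h3
  -- Step 2: α lies in every power of the maximal ideal.
  have hΦm : ∀ x : R, x ∈ IsLocalRing.maximalIdeal R → Φ x ∈ IsLocalRing.maximalIdeal R := by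
    intro x hx
    rw [IsLocalRing.mem_maximalIdeal, mem_nonunits_iff] at hx ⊢
    intro hu
    exact hx (by simpa using hu.map Φ.symm)
  have hmapm : Ideal.map (Φ : R →+* R) (IsLocalRing.maximalIdeal R)
      = IsLocalRing.maximalIdeal R := by
    apply le_antisymm
    · rw [Ideal.map_le_iff_le_comap]
      intro x hx
      exact Ideal.mem_comap.mpr (hΦm x hx)
    · intro y hy
      have : Φ (Φ.symm y) = y := Φ.apply_symm_apply y
      rw [← this]
      refine Ideal.mem_map_of_mem _ ?_
      rw [IsLocalRing.mem_maximalIdeal, mem_nonunits_iff] at hy ⊢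
      intro hu
      exact hy (by simpa using hu.map Φ)
  have hmapk : ∀ (k : ℕ) (x : R), x ∈ (IsLocalRing.maximalIdeal R) ^ k →
      Φ x ∈ (IsLocalRing.maximalIdeal R) ^ k := by
    intro k x hx
    have : Ideal.map (Φ : R →+* R) ((IsLocalRing.maximalIdeal R) ^ k)
        = (IsLocalRing.maximalIdeal R) ^ k := by
      rw [Ideal.map_pow, hmapm]
    rw [← this]
    exact Ideal.mem_map_of_mem _ hx
  have hpow : ∀ k : ℕ, α ∈ (IsLocalRing.maximalIdeal R) ^ k := by
    intro k
    -- the quotient is finite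
    haveI : Finite (R ⧸ (IsLocalRing.maximalIdeal R) ^ k) := by
      refine aux_finite_of_pow_smul_eq_bot R k _ ?_
      refine le_antisymm ?_ bot_le
      refine Submodule.smul_le.mpr ?_
      intro r hr x _
      obtain ⟨y, rfl⟩ := Ideal.Quotient.mk_surjective x
      rw [Submodule.mem_bot]
      show Ideal.Quotient.mk _ (r * y) = 0
      rw [Ideal.Quotient.eq_zero_iff_mem]
      exact Ideal.mul_mem_right y _ hr
    -- the automorphism induced on the finite quotient
    have hle : (IsLocalRing.maximalIdeal R) ^ k ≤
        Ideal.comap (Φ : R →+* R) ((IsLocalRing.maximalIdeal R) ^ k) :=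
      fun x hx => Ideal.mem_comap.mpr (hmapk k x hx)
    set ψ := Ideal.quotientMap ((IsLocalRing.maximalIdeal R) ^ k) (Φ : R →+* R) hle with hψ
    have hsurj : Function.Surjective ψ :=
      Ideal.quotientMap_surjective Φ.surjective
    have hbij : Function.Bijective ψ := Finite.surjective_iff_bijective.mp hsurj
    set E : Equiv.Perm (R ⧸ (IsLocalRing.maximalIdeal R) ^ k) :=
      Equiv.ofBijective ψ hbij with hE
    have hEapp : ∀ (j : ℕ) (x : R),
        (E ^ j) (Ideal.Quotient.mk _ x) = Ideal.Quotient.mk _ ((Φ ^ j) x) := by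
      intro j
      induction j with
      | zero => intro x; simp
      | succ j ihj =>
        intro x
        rw [pow_succ, Equiv.Perm.mul_apply, pow_succ, AlgEquiv.mul_apply]
        have hEx : E (Ideal.Quotient.mk _ x) = Ideal.Quotient.mk _ (Φ x) := by
          rw [hE, Equiv.ofBijective_apply, hψ, Ideal.quotientMap_mk]
          rfl
        rw [hEx, ihj (Φ x)]
    have hnpos : 0 < orderOf E := orderOf_pos E
    have hfix : ∀ x : R, (Φ ^ orderOf E) x - x ∈ (IsLocalRing.maximalIdeal R) ^ k := by
      intro x
      have h1 : (E ^ orderOf E) (Ideal.Quotient.mk _ x) = Ideal.Quotient.mk _ x := by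
        rw [pow_orderOf_eq_one E]; rfl
      have h2 := hEapp (orderOf E) x
      rw [h1] at h2
      exact Ideal.Quotient.eq.mp h2.symm
    have hIle : I (orderOf E) ≤ (IsLocalRing.maximalIdeal R) ^ k := by
      rw [hI (orderOf E), Ideal.span_le]
      rintro _ ⟨x, rfl⟩
      exact hfix x
    exact hIle (hIn (orderOf E) hnpos)
  -- Step 3: Krull intersection theorem.
  have hbot : (⨅ i : ℕ, (IsLocalRing.maximalIdeal R) ^ i) = ⊥ :=
    Ideal.iInf_pow_eq_bot_of_isLocalRing _
      (Ideal.IsMaximal.ne_top (IsLocalRing.maximalIdeal.isMaximal R))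
  have : α ∈ (⨅ i : ℕ, (IsLocalRing.maximalIdeal R) ^ i) :=
    Submodule.mem_iInf _ |>.mpr hpow
  rw [hbot, Submodule.mem_bot] at this
  exact this
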